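/- Let E be a finite-dimensional real normed vector space, k ≥ 1, T > 0 and h > 0 with t_n = n h. Let S : ℝ × E^k × (0,∞) → E^k be a k-multistep scheme generator satisfying, for constants C₁, C₂ > 0 and all t ∈ [0,T], Y, Z ∈ E^k: 1 + |S(t,Y,h)|_∞ ≤ (1 + |Y|_∞)(1 + C₁ h) and |S(t,Y,h) − S(t,Z,h)|_∞ ≤ |Y − Z|_∞ (1 + C₂ h (1 + |Y|_∞)). Let Y : [(k−1)h, T] → E^k and suppose the scheme is consistent of order p along Y, i.e. the local errors ε(t_n,h) = Y(t_{n+1}) − S(t_n, Y(t_n), h) satisfy max_{k−1 ≤ n ≤ T/h} |ε(t_n,h)|_∞ ≤ L_c h^{p+1} for some constant L_c > 0. Then every numerical solution (Y_n) with Y_{n+1} = S(t_n, Y_n, h) satisfies max_{k−1 ≤ n ≤ T/h} |Y(t_n) − Y_n|_∞ ≤ L_s L_c T h^p + L_s |ξ₀|_∞, where ξ₀ = Y(t_{k−1}) − Y_{k−1} and L_s = e^{C★ T} with C★ = C₂ e^{C₁ T}(1 + |Y_{k−1}|_∞). -/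

import Mathlib

/-- Stability + consistency of order p implies convergence of order p. -/
theorem convergence_of_stable_consistent_scheme
    {E : Type*} [NormedAddCommGroup E] [NormedSpace ℝ E] [FiniteDimensional ℝ E]
    (k : ℕ) (hk : 1 ≤ k) (T h : ℝ) (hT : 0 < T) (hh : 0 < h)
    (s : ℝ → (Fin k → E) → E)
    (S : ℝ → (Fin k → E) → Fin k → E)
    (hS : ∀ t Y (i : Fin k),
      S t Y i = if hi : (i : ℕ) + 1 < k then Y ⟨(i : ℕ) + 1, hi⟩ else s t Y)
    (C₁ C₂ : ℝ) (hC₁ : 0 < C₁) (hC₂ : 0 < C₂)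
    (hbound : ∀ t ∈ Set.Icc (0 : ℝ) T, ∀ Y : Fin k → E,
      1 + ‖S t Y‖ ≤ (1 + ‖Y‖) * (1 + C₁ * h))
    (hlip : ∀ t ∈ Set.Icc (0 : ℝ) T, ∀ Y Z : Fin k → E,
      ‖S t Y - S t Z‖ ≤ ‖Y - Z‖ * (1 + C₂ * h * (1 + ‖Y‖)))
    (Yex : ℝ → Fin k → E) (p : ℕ) (Lc : ℝ) (hLc : 0 < Lc)
    (hconsist : ∀ n ∈ Finset.Icc (k - 1) ⌊T / h⌋₊,
      ‖Yex ((n + 1 : ℕ) * h) - S (n * h) (Yex (n * h))‖ ≤ Lc * h ^ (p + 1))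
    (Y : ℕ → Fin k → E)
    (hY : ∀ n, k - 1 ≤ n → Y (n + 1) = S (n * h) (Y n)) :
    ∀ n ∈ Finset.Icc (k - 1) ⌊T / h⌋₊,
      ‖Yex (n * h) - Y n‖ ≤
        Real.exp (C₂ * Real.exp (C₁ * T) * (1 + ‖Y (k - 1)‖) * T) * Lc * T * h ^ p +
        Real.exp (C₂ * Real.exp (C₁ * T) * (1 + ‖Y (k - 1)‖) * T) *
          ‖Yex ((k - 1 : ℕ) * h) - Y (k - 1)‖ := by
  set K := k - 1 with hKdef
  set N := ⌊T / h⌋₊ with hNdef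
  have hle : ∀ n : ℕ, n ≤ N → (n : ℝ) * h ≤ T := by
    intro n hn
    have h1 : (n : ℝ) ≤ T / h :=
      le_trans (Nat.cast_le.2 hn) (Nat.floor_le (by positivity))
    calc (n : ℝ) * h ≤ (T / h) * h := by nlinarith
      _ = T := by field_simp
  -- growth of the numerical solution
  have hgrow0 : ∀ m : ℕ, K + m ≤ N →
      1 + ‖Y (K + m)‖ ≤ (1 + ‖Y K‖) * Real.exp (C₁ * ((m : ℝ) * h)) := by
    intro m
    induction m with
    | zero => intro _; simp
    | succ m ih =>
      intro hm
      have hm' : K + m ≤ N := by omega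
      have ht : (((K + m : ℕ) : ℝ) * h) ∈ Set.Icc (0 : ℝ) T :=
        ⟨by positivity, hle _ hm'⟩
      have hYs : Y (K + m + 1) = S (((K + m : ℕ) : ℝ) * h) (Y (K + m)) :=
        hY (K + m) (by omega)
      have h1 : 1 + ‖Y (K + m + 1)‖ ≤ (1 + ‖Y (K + m)‖) * (1 + C₁ * h) := by
        rw [hYs]; exact hbound _ ht (Y (K + m))
      have h2 : (1 : ℝ) + C₁ * h ≤ Real.exp (C₁ * h) := by
        have := Real.add_one_le_exp (C₁ * h); linarith
      have h3 := ih hm'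
      have : 1 + ‖Y (K + m + 1)‖ ≤
          ((1 + ‖Y K‖) * Real.exp (C₁ * ((m : ℝ) * h))) * Real.exp (C₁ * h) := by
        refine h1.trans (mul_le_mul h3 h2 (by positivity) (by positivity))
      refine this.trans_eq ?_
      rw [mul_assoc, ← Real.exp_add]
      push_cast
      ring_nf
  have hgrow : ∀ m : ℕ, K + m ≤ N →
      1 + ‖Y (K + m)‖ ≤ (1 + ‖Y K‖) * Real.exp (C₁ * T) := by
    intro m hm
    refine (hgrow0 m hm).trans ?_
    have hmh : (m : ℝ) * h ≤ T := by
      have h1 := hle (K + m) hm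
      have h2 : (m : ℝ) ≤ ((K + m : ℕ) : ℝ) := by
        push_cast; linarith [(Nat.cast_nonneg K : (0:ℝ) ≤ (K:ℝ))]
      nlinarith
    have : Real.exp (C₁ * ((m : ℝ) * h)) ≤ Real.exp (C₁ * T) := by
      apply Real.exp_le_exp.2; nlinarith
    exact mul_le_mul_of_nonneg_left this (by positivity)
  set Cs := C₂ * Real.exp (C₁ * T) * (1 + ‖Y K‖) with hCsdef
  have hCs : 0 < Cs := by
    have : (0:ℝ) < 1 + ‖Y K‖ := by positivity
    positivity
  have hb : (0:ℝ) < Lc * h ^ (p + 1) := by positivity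
  -- main induction
  have hmain : ∀ m : ℕ, K + m ≤ N →
      ‖Yex (((K + m : ℕ) : ℝ) * h) - Y (K + m)‖ ≤
        Real.exp (Cs * ((m : ℝ) * h)) *
          (‖Yex ((K : ℝ) * h) - Y K‖ + (m : ℝ) * (Lc * h ^ (p + 1))) := by
    intro m
    induction m with
    | zero => intro _; simp
    | succ m ih =>
      intro hm
      have hm' : K + m ≤ N := by omega
      have ih' := ih hm'
      have ht : (((K + m : ℕ) : ℝ) * h) ∈ Set.Icc (0 : ℝ) T :=
        ⟨by positivity, hle _ hm'⟩
      have hYs : Y (K + m + 1) = S (((K + m : ℕ) : ℝ) * h) (Y (K + m)) :=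
        hY (K + m) (by omega)
      have hcons := hconsist (K + m) (Finset.mem_Icc.2 ⟨Nat.le_add_right _ _, hm'⟩)
      have hlip' := hlip _ ht (Y (K + m)) (Yex (((K + m : ℕ) : ℝ) * h))
      have hfac : 1 + C₂ * h * (1 + ‖Y (K + m)‖) ≤ Real.exp (Cs * h) := by
      -- 1 + Cs*h ≤ exp(Cs*h)
        have h2 : (1 : ℝ) + Cs * h ≤ Real.exp (Cs * h) := by
          have := Real.add_one_le_exp (Cs * h); linarith
        have h3 := hgrow m hm'
        have h5 : C₂ * h * (1 + ‖Y (K + m)‖) ≤ C₂ * h * ((1 + ‖Y K‖) * Real.exp (C₁ * T)) :=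
          mul_le_mul_of_nonneg_left h3 (by positivity)
        have h4 : C₂ * h * (1 + ‖Y (K + m)‖) ≤ Cs * h := by
          rw [hCsdef]; nlinarith [h5]
        linarith
      have htri : ‖Yex (((K + m + 1 : ℕ) : ℝ) * h) - Y (K + m + 1)‖ ≤
          ‖Yex (((K + m + 1 : ℕ) : ℝ) * h) - S (((K + m : ℕ) : ℝ) * h) (Yex (((K + m : ℕ) : ℝ) * h))‖ +
          ‖S (((K + m : ℕ) : ℝ) * h) (Yex (((K + m : ℕ) : ℝ) * h)) - Y (K + m + 1)‖ := by
        have := dist_triangle (Yex (((K + m + 1 : ℕ) : ℝ) * h))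
          (S (((K + m : ℕ) : ℝ) * h) (Yex (((K + m : ℕ) : ℝ) * h))) (Y (K + m + 1))
        simpa [dist_eq_norm] using this
      have hterm2 : ‖S (((K + m : ℕ) : ℝ) * h) (Yex (((K + m : ℕ) : ℝ) * h)) - Y (K + m + 1)‖ ≤
          ‖Yex (((K + m : ℕ) : ℝ) * h) - Y (K + m)‖ * Real.exp (Cs * h) := by
        rw [hYs, norm_sub_rev]
        refine hlip'.trans ?_
        rw [norm_sub_rev]
        exact mul_le_mul_of_nonneg_left hfac (norm_nonneg _)
      have hstep : ‖Yex (((K + m + 1 : ℕ) : ℝ) * h) - Y (K + m + 1)‖ ≤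
          Lc * h ^ (p + 1) +
            ‖Yex (((K + m : ℕ) : ℝ) * h) - Y (K + m)‖ * Real.exp (Cs * h) := by
        have : (((K + m : ℕ) + 1 : ℕ) : ℝ) = ((K + m + 1 : ℕ) : ℝ) := by push_cast; ring
        refine htri.trans ?_
        rw [this] at hcons
        exact add_le_add hcons hterm2
      show ‖Yex (((K + m + 1 : ℕ) : ℝ) * h) - Y (K + m + 1)‖ ≤
        Real.exp (Cs * (((m + 1 : ℕ) : ℝ) * h)) *
          (‖Yex ((K : ℝ) * h) - Y K‖ + ((m + 1 : ℕ) : ℝ) * (Lc * h ^ (p + 1)))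
      have hEeq : Real.exp (Cs * ((m : ℝ) * h)) * Real.exp (Cs * h) =
          Real.exp (Cs * (((m + 1 : ℕ) : ℝ) * h)) := by
        rw [← Real.exp_add]; push_cast; ring_nf
      have hE1 : (1 : ℝ) ≤ Real.exp (Cs * (((m + 1 : ℕ) : ℝ) * h)) := by
        apply Real.one_le_exp; positivity
      have h0 : (0:ℝ) ≤ ‖Yex ((K : ℝ) * h) - Y K‖ := norm_nonneg _
      calc ‖Yex (((K + m + 1 : ℕ) : ℝ) * h) - Y (K + m + 1)‖
          ≤ Lc * h ^ (p + 1) +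
            ‖Yex (((K + m : ℕ) : ℝ) * h) - Y (K + m)‖ * Real.exp (Cs * h) := hstep
        _ ≤ Lc * h ^ (p + 1) +
            (Real.exp (Cs * ((m : ℝ) * h)) *
              (‖Yex ((K : ℝ) * h) - Y K‖ + (m : ℝ) * (Lc * h ^ (p + 1)))) *
              Real.exp (Cs * h) := by
            have := mul_le_mul_of_nonneg_right ih' (Real.exp_nonneg (Cs * h))
            linarith
        _ = Lc * h ^ (p + 1) + Real.exp (Cs * (((m + 1 : ℕ) : ℝ) * h)) *
              (‖Yex ((K : ℝ) * h) - Y K‖ + (m : ℝ) * (Lc * h ^ (p + 1))) := by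
            rw [mul_right_comm, hEeq]
        _ ≤ Real.exp (Cs * (((m + 1 : ℕ) : ℝ) * h)) *
              (‖Yex ((K : ℝ) * h) - Y K‖ + ((m + 1 : ℕ) : ℝ) * (Lc * h ^ (p + 1))) := by
            push_cast at hE1 ⊢
            have := mul_le_mul_of_nonneg_left hE1 hb.le
            nlinarith [this]
  -- conclusion
  intro n hn
  obtain ⟨hn1, hn2⟩ := Finset.mem_Icc.1 hn
  obtain ⟨m, rfl⟩ := Nat.exists_eq_add_of_le hn1
  have h1 := hmain m hn2
  have hmh : (m : ℝ) * h ≤ T := by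
    have h1 := hle (K + m) hn2
    have h2 : (m : ℝ) ≤ ((K + m : ℕ) : ℝ) := by
      push_cast; linarith [(Nat.cast_nonneg K : (0:ℝ) ≤ (K:ℝ))]
    nlinarith
  have hE : Real.exp (Cs * ((m : ℝ) * h)) ≤ Real.exp (Cs * T) := by
    apply Real.exp_le_exp.2; nlinarith
  have hbb : (m : ℝ) * (Lc * h ^ (p + 1)) ≤ T * (Lc * h ^ p) := by
    have heq : (m : ℝ) * (Lc * h ^ (p + 1)) = ((m : ℝ) * h) * (Lc * h ^ p) := by
      rw [pow_succ]; ring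
    rw [heq]
    exact mul_le_mul_of_nonneg_right hmh (by positivity)
  have h0 : (0:ℝ) ≤ ‖Yex ((K : ℝ) * h) - Y K‖ := norm_nonneg _
  calc ‖Yex (((K + m : ℕ) : ℝ) * h) - Y (K + m)‖
      ≤ Real.exp (Cs * ((m : ℝ) * h)) *
          (‖Yex ((K : ℝ) * h) - Y K‖ + (m : ℝ) * (Lc * h ^ (p + 1))) := h1
    _ ≤ Real.exp (Cs * T) * (‖Yex ((K : ℝ) * h) - Y K‖ + T * (Lc * h ^ p)) := by
        have hA : (0:ℝ) ≤ ‖Yex ((K : ℝ) * h) - Y K‖ + (m : ℝ) * (Lc * h ^ (p + 1)) := by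
          positivity
        have := mul_le_mul hE (add_le_add le_rfl hbb) hA (Real.exp_nonneg _)
        linarith [this]
    _ = Real.exp (Cs * T) * Lc * T * h ^ p +
          Real.exp (Cs * T) * ‖Yex ((K : ℝ) * h) - Y K‖ := by ring
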